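/- Let A be a symmetric n×n real nonnegative matrix with positive row sums d_i, D = diag(d_i), P = A D^{-1}, α ∈ (0,1), and v a stochastic vector. If y is a vector with nonnegative entries whose residual r = D^{-1}v − (I − αPᵀ)y also has all entries nonnegative, then the vector x = (1−α)D y satisfies Σ_i x_i ≤ 1. -/

import Mathlib

open Matrix

theorem push_mass_bound {n : ℕ} (A : Matrix (Fin n) (Fin n) ℝ)
    (hAsymm : A.IsSymm) (hA0 : ∀ i j, 0 ≤ A i j)
    (d : Fin n → ℝ) (hd : ∀ i, d i = ∑ j, A i j) (hdpos : ∀ i, 0 < d i)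
    (α : ℝ) (hα0 : 0 < α) (hα1 : α < 1)
    (v : Fin n → ℝ) (hv0 : ∀ i, 0 ≤ v i) (hv1 : ∑ i, v i = 1)
    (y : Fin n → ℝ) (hy0 : ∀ i, 0 ≤ y i) (r : Fin n → ℝ)
    (hr : r = (diagonal fun i => (d i)⁻¹) *ᵥ v -
      (1 - α • (A * diagonal fun i => (d i)⁻¹)ᵀ) *ᵥ y)
    (hr0 : ∀ i, 0 ≤ r i)
    (x : Fin n → ℝ) (hx : x = (1 - α) • (diagonal d *ᵥ y)) :
    ∑ i, x i ≤ 1 := by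
  have hdr : ∀ i, d i * r i = v i - d i * y i + α * ∑ j, A j i * y j := by
    intro i
    have hdi : d i ≠ 0 := (hdpos i).ne'
    subst hr
    simp only [Pi.sub_apply, mulVec_diagonal, sub_mulVec, one_mulVec,
      smul_mulVec, Pi.smul_apply, smul_eq_mul, mulVec, dotProduct,
      transpose_apply, Matrix.mul_apply, diagonal_apply]
    simp only [mul_ite, mul_zero, ite_mul, zero_mul, Finset.sum_ite_eq, Finset.sum_ite_eq',
      Finset.mem_univ, if_true]
    rw [show ∑ x, A x i * (d i)⁻¹ * y x = (d i)⁻¹ * ∑ x, A x i * y x by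
      rw [Finset.mul_sum]; exact Finset.sum_congr rfl fun x _ => by ring]
    field_simp
    ring
  have hsum : ∑ i, d i * r i = 1 - ∑ i, x i := by
    have h1 : ∑ i, (α * ∑ j, A j i * y j) = α * ∑ j, d j * y j := by
      rw [← Finset.mul_sum]
      congr 1
      rw [Finset.sum_comm]
      refine Finset.sum_congr rfl fun j _ => ?_
      rw [← Finset.sum_mul, ← hd j]
    have hx' : ∑ i, x i = (1 - α) * ∑ i, d i * y i := by
      subst hx
      rw [Finset.mul_sum]
      exact Finset.sum_congr rfl fun i _ => by simp [mulVec_diagonal]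
    calc ∑ i, d i * r i = ∑ i, (v i - d i * y i + α * ∑ j, A j i * y j) :=
          Finset.sum_congr rfl fun i _ => hdr i
      _ = (∑ i, v i) - (∑ i, d i * y i) + ∑ i, (α * ∑ j, A j i * y j) := by
          rw [Finset.sum_add_distrib, Finset.sum_sub_distrib]
      _ = 1 - ∑ i, x i := by rw [hv1, h1, hx']; ring
  have hnn : 0 ≤ ∑ i, d i * r i :=
    Finset.sum_nonneg fun i _ => mul_nonneg (hdpos i).le (hr0 i)
  linarith [hsum ▸ hnn]
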